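/- Let Ω be a probability space with measure π, let X : Ω → S be a random variable taking finitely many values, let E ⊆ Ω be an event with π(E) > 0, and let η be a probability distribution on S such that η(x) > 0 whenever π(X = x) > 0. Then D( law of X given E ∥ η ) ≤ (1/π(E)) · ( D( law of X ∥ η ) + H(π(E)) ). -/

import Mathlib

open MeasureTheory ProbabilityTheory

/-- Kullback–Leibler divergence (base-2 logarithms) between finitely supported
distributions given as real-valued mass functions: `D(p ∥ q) = Σ_x p(x)·log₂(p(x)/q(x))`. -/
noncomputable def klDiv2 {S : Type*} [Fintype S] (p q : S → ℝ) : ℝ :=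
  ∑ s : S, p s * Real.logb 2 (p s / q s)

/-- The binary entropy function, `H(p) = p·log₂(1/p) + (1−p)·log₂(1/(1−p))`,
with `H 0 = H 1 = 0` under the conventions of `Real.logb`. -/
noncomputable def binEnt (p : ℝ) : ℝ :=
  p * Real.logb 2 (1 / p) + (1 - p) * Real.logb 2 (1 / (1 - p))

/-- Gibbs-type inequality for a subdistribution: if `b ≥ 0`, `η ≥ 0` sums to at most 1,
and `η s > 0` whenever `b s > 0`, then `∑ b s · ln(b s / η s) ≥ B · ln B` where `B = ∑ b`. -/
lemma sub_gibbs {S : Type*} [Fintype S] (b η : S → ℝ)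
    (hb0 : ∀ s, 0 ≤ b s) (hη0 : ∀ s, 0 ≤ η s) (hη1 : (∑ s, η s) = 1)
    (hbη : ∀ s, b s ≠ 0 → 0 < η s) :
    (∑ s, b s) * Real.log (∑ s, b s) ≤ ∑ s, b s * Real.log (b s / η s) := by
  set B := ∑ s, b s with hB
  have hB0 : 0 ≤ B := Finset.sum_nonneg fun s _ => hb0 s
  rcases eq_or_lt_of_le hB0 with h0 | hBpos
  · have hall : ∀ s ∈ Finset.univ (α := S), b s = 0 :=
      (Finset.sum_eq_zero_iff_of_nonneg (fun s _ => hb0 s)).1 h0.symm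
    have hz : (∑ s, b s * Real.log (b s / η s)) = 0 :=
      Finset.sum_eq_zero fun s hs => by rw [hall s hs, zero_mul]
    rw [hz, ← h0, zero_mul]
  · -- pointwise: b s * Real.log B + (b s - B * η s) ≤ b s * Real.log (b s / η s)
    have key : ∀ s, b s * Real.log B + (b s - B * η s) ≤ b s * Real.log (b s / η s) := by
      intro s
      rcases eq_or_lt_of_le (hb0 s) with hbz | hbpos
      · rw [← hbz]
        have h := mul_nonneg (le_of_lt hBpos) (hη0 s)
        simp only [zero_mul, zero_sub, zero_add]
        linarith
      · have hηs : 0 < η s := hbη s (ne_of_gt hbpos)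
        have hx : 0 < B * η s / b s := by positivity
        have h1 : Real.log (B * η s / b s) ≤ B * η s / b s - 1 :=
          Real.log_le_sub_one_of_pos hx
        have h2 : Real.log (B * η s / b s)
            = Real.log B + Real.log (η s) - Real.log (b s) := by
          rw [Real.log_div (by positivity) (ne_of_gt hbpos),
              Real.log_mul (ne_of_gt hBpos) (ne_of_gt hηs)]
        have h3 : Real.log (b s / η s) = Real.log (b s) - Real.log (η s) :=
          Real.log_div (ne_of_gt hbpos) (ne_of_gt hηs)
        have h4 : b s * (B * η s / b s) = B * η s := by
          field_simp
        nlinarith [mul_le_mul_of_nonneg_left h1 (le_of_lt hbpos)]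
    have hsum := Finset.sum_le_sum (fun s (_ : s ∈ Finset.univ) => key s)
    have hlhs : (∑ s, (b s * Real.log B + (b s - B * η s)))
        = B * Real.log B + (B - B * (∑ s, η s)) := by
      rw [Finset.sum_add_distrib, Finset.sum_sub_distrib, ← Finset.sum_mul,
          ← Finset.mul_sum]
    rw [hlhs, hη1] at hsum
    calc B * Real.log B = B * Real.log B + (B - B * 1) := by ring
    _ ≤ _ := hsum


/-- Pure-real version of the main inequality. -/
lemma klDiv2_cond_aux {S : Type*} [Fintype S] (u p a b η : S → ℝ) (t : ℝ)
    (ht0 : 0 < t) (ht1 : t ≤ 1)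
    (hu0 : ∀ s, 0 ≤ u s) (hb0 : ∀ s, 0 ≤ b s)
    (hat : ∀ s, a s = t * u s) (hpab : ∀ s, p s = a s + b s)
    (hsumu : (∑ s, u s) = 1) (hsump : (∑ s, p s) = 1)
    (hη0 : ∀ s, 0 ≤ η s) (hη1 : (∑ s, η s) = 1)
    (hpη : ∀ s, p s ≠ 0 → 0 < η s) :
    klDiv2 u η ≤ (1 / t) * (klDiv2 p η + binEnt t) := by
  have ha0 : ∀ s, 0 ≤ a s := fun s => by rw [hat s]; exact mul_nonneg ht0.le (hu0 s)
  have hp0 : ∀ s, 0 ≤ p s := fun s => by rw [hpab s]; exact add_nonneg (ha0 s) (hb0 s)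
  have hsuma : (∑ s, a s) = t := by
    rw [Finset.sum_congr rfl fun s _ => hat s, ← Finset.mul_sum, hsumu, mul_one]
  have hsumb : (∑ s, b s) = 1 - t := by
    have h : (∑ s, p s) = (∑ s, a s) + (∑ s, b s) := by
      rw [← Finset.sum_add_distrib]
      exact Finset.sum_congr rfl fun s _ => hpab s
    rw [hsump, hsuma] at h; linarith
  -- step 6 : Gibbs for b
  have hbη : ∀ s, b s ≠ 0 → 0 < η s := fun s h => by
    refine hpη s (fun hz => h ?_)
    have := hb0 s; have := ha0 s; have := hpab s
    linarith
  have step6 : (1 - t) * Real.log (1 - t) ≤ ∑ s, b s * Real.log (b s / η s) := by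
    have := sub_gibbs b η hb0 hη0 hη1 hbη
    rwa [hsumb] at this
  -- step 5 : split off the a-part
  have step5 : (∑ s, a s * Real.log (a s / η s))
      = t * (∑ s, u s * Real.log (u s / η s)) + t * Real.log t := by
    have point : ∀ s, a s * Real.log (a s / η s)
        = t * (u s * Real.log (u s / η s)) + (t * Real.log t) * u s := by
      intro s
      rcases eq_or_lt_of_le (hu0 s) with h | h
      · rw [hat s, ← h]; simp
      · have hps : 0 < p s := by
          have := mul_pos ht0 h
          rw [hpab s, hat s]; have := hb0 s; linarith
        have hηs : 0 < η s := hpη s (ne_of_gt hps)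
        rw [hat s]
        have heq : t * u s / η s = t * (u s / η s) := by ring
        rw [heq, Real.log_mul (ne_of_gt ht0) (by positivity)]
        ring
    rw [Finset.sum_congr rfl fun s _ => point s, Finset.sum_add_distrib,
        ← Finset.mul_sum, ← Finset.mul_sum, hsumu, mul_one]
  -- step 4 : pointwise superadditivity
  have step4 : ∀ s, a s * Real.log (a s / η s) + b s * Real.log (b s / η s)
      ≤ p s * Real.log (p s / η s) := by
    intro s
    rcases eq_or_lt_of_le (hp0 s) with h | hps
    · have hpz := h.symm
      have haz : a s = 0 := by have := hpab s; have := ha0 s; have := hb0 s; linarith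
      have hbz : b s = 0 := by have := hpab s; have := ha0 s; have := hb0 s; linarith
      rw [hpz, haz, hbz]; simp
    · have hηs : 0 < η s := hpη s (ne_of_gt hps)
      have h1 : a s * Real.log (a s / η s) ≤ a s * Real.log (p s / η s) := by
        rcases eq_or_lt_of_le (ha0 s) with h | h
        · rw [← h]; simp
        · refine mul_le_mul_of_nonneg_left (Real.log_le_log (by positivity) ?_) (ha0 s)
          have hap : a s ≤ p s := by rw [hpab s]; have := hb0 s; linarith
          gcongr
      have h2 : b s * Real.log (b s / η s) ≤ b s * Real.log (p s / η s) := by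
        rcases eq_or_lt_of_le (hb0 s) with h | h
        · rw [← h]; simp
        · refine mul_le_mul_of_nonneg_left (Real.log_le_log (by positivity) ?_) (hb0 s)
          have hbp : b s ≤ p s := by rw [hpab s]; have := ha0 s; linarith
          gcongr
      have h3 : p s * Real.log (p s / η s)
          = a s * Real.log (p s / η s) + b s * Real.log (p s / η s) := by
        rw [hpab s]; ring
      linarith
  have step4' : (∑ s, a s * Real.log (a s / η s)) + (∑ s, b s * Real.log (b s / η s))
      ≤ ∑ s, p s * Real.log (p s / η s) := by
    rw [← Finset.sum_add_distrib]
    exact Finset.sum_le_sum fun s _ => step4 s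
  -- the key inequality in natural logarithms
  have key : t * (∑ s, u s * Real.log (u s / η s))
      ≤ (∑ s, p s * Real.log (p s / η s))
        + (-(t * Real.log t) - (1 - t) * Real.log (1 - t)) := by
    linarith [step5, step4', step6]
  -- convert to base-2
  have hL2 : 0 < Real.log 2 := Real.log_pos (by norm_num)
  have hklu : klDiv2 u η = (∑ s, u s * Real.log (u s / η s)) / Real.log 2 := by
    unfold klDiv2
    simp only [Real.logb, ← mul_div_assoc]
    rw [← Finset.sum_div]
  have hklp : klDiv2 p η = (∑ s, p s * Real.log (p s / η s)) / Real.log 2 := by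
    unfold klDiv2
    simp only [Real.logb, ← mul_div_assoc]
    rw [← Finset.sum_div]
  have hbe : binEnt t = (-(t * Real.log t) - (1 - t) * Real.log (1 - t)) / Real.log 2 := by
    rw [binEnt, Real.logb, Real.logb, one_div, one_div, Real.log_inv, Real.log_inv]
    ring
  rw [hklu, hklp, hbe, ← add_div]
  have hrw : (1 / t) * ((∑ s, p s * Real.log (p s / η s)
        + (-(t * Real.log t) - (1 - t) * Real.log (1 - t))) / Real.log 2)
      = (∑ s, p s * Real.log (p s / η s)
        + (-(t * Real.log t) - (1 - t) * Real.log (1 - t))) / (t * Real.log 2) := by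
    field_simp
  rw [hrw, div_le_div_iff₀ hL2 (by positivity)]
  nlinarith [mul_le_mul_of_nonneg_right key hL2.le]

/-- **KL divergence under conditioning on an event.**
Let `X` be a finitely-valued random variable, `E` an event with `π(E) > 0`, and `η` a
probability distribution with `η(x) > 0` whenever `π(X = x) > 0`.  Then
`D(law of X given E ∥ η) ≤ (1/π(E))·( D(law of X ∥ η) + H(π(E)) )`. -/
theorem stmt12 {Ω S : Type*} [MeasurableSpace Ω] [Fintype S]
    (π : Measure Ω) [IsProbabilityMeasure π]
    (X : Ω → S) (hX : ∀ s, MeasurableSet {ω | X ω = s})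
    (E : Set Ω) (hE : MeasurableSet E) (hE0 : π E ≠ 0)
    (η : S → ℝ) (hη0 : ∀ s, 0 ≤ η s) (hη1 : (∑ s, η s) = 1)
    (hηpos : ∀ s, π {ω | X ω = s} ≠ 0 → 0 < η s) :
    klDiv2 (fun s => ((π[|E]) {ω | X ω = s}).toReal) η ≤
      (1 / (π E).toReal) *
        (klDiv2 (fun s => (π {ω | X ω = s}).toReal) η + binEnt (π E).toReal) := by
  have hEtop : π E ≠ ⊤ := measure_ne_top π E
  have ht0 : 0 < (π E).toReal := ENNReal.toReal_pos hE0 hEtop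
  have ht1 : (π E).toReal ≤ 1 := by
    have h := prob_le_one (μ := π) (s := E)
    simpa using ENNReal.toReal_mono (by simp) h
  have hpm : IsProbabilityMeasure (π[|E]) := cond_isProbabilityMeasure hE0
  refine klDiv2_cond_aux _ _ (fun s => (π (E ∩ {ω | X ω = s})).toReal)
      (fun s => (π ({ω | X ω = s} \ E)).toReal) η ((π E).toReal) ht0 ht1
      (fun s => ENNReal.toReal_nonneg) (fun s => ENNReal.toReal_nonneg)
      ?_ ?_ ?_ ?_ hη0 hη1 ?_
  · intro s
    rw [cond_apply hE, ENNReal.toReal_mul, ENNReal.toReal_inv, ← mul_assoc,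
        mul_inv_cancel₀ (ne_of_gt ht0), one_mul]
  · intro s
    rw [← measure_inter_add_diff {ω | X ω = s} hE,
        ENNReal.toReal_add (measure_ne_top _ _) (measure_ne_top _ _), Set.inter_comm]
  · have h1 : (∑ s, (π[|E]) {ω | X ω = s}) = 1 := by
      have h := sum_measure_preimage_singleton (μ := π[|E]) Finset.univ (f := X)
        (fun y _ => hX y)
      simp at h; exact h
    rw [← ENNReal.toReal_sum (fun s _ => measure_ne_top _ _), h1, ENNReal.toReal_one]
  · have h1 : (∑ s, π {ω | X ω = s}) = 1 := by
      have h := sum_measure_preimage_singleton (μ := π) Finset.univ (f := X)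
        (fun y _ => hX y)
      simp at h; exact h
    rw [← ENNReal.toReal_sum (fun s _ => measure_ne_top _ _), h1, ENNReal.toReal_one]
  · intro s h
    refine hηpos s (fun hz => h ?_)
    simp [hz]
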